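/- Let h_1, …, h_n : ℝ^d → ℝ be affine functions and consider the connected components (called regions) of the set ℝ^d \ ∪_{i=1}^n {x : h_i(x) = 0}. For a region R, its activation set is {i : h_i(x) > 0 for all x ∈ R}. Then for every 0 ≤ m ≤ n, the number of regions whose activation set has size at least n − m is at most Σ_{j=0}^{m} f_{j,d}(n). In particular f_{j,d}(n) = 0 for j > (n + min{d,n})/2. -/

import Mathlib

open scoped BigOperators
open MeasureTheory

noncomputable section

/-- The ReLU activation function. -/
def relu (x : ℝ) : ℝ := max x 0

/-- `f : ℝ^n → ℝ^m` is an affine map. -/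
def IsAffineMap {n m : ℕ} (f : (Fin n → ℝ) → Fin m → ℝ) : Prop :=
  ∃ (A : Matrix (Fin m) (Fin n) ℝ) (b : Fin m → ℝ),
    ∀ x i, f x i = (∑ j, A i j * x j) + b i

/-- `f : ℝ^n → ℝ^m` is an affine map all of whose coefficients have absolute value ≤ c. -/
def IsAffineMapB (c : ℝ) {n m : ℕ} (f : (Fin n → ℝ) → Fin m → ℝ) : Prop :=
  ∃ (A : Matrix (Fin m) (Fin n) ℝ) (b : Fin m → ℝ),
    (∀ i j, |A i j| ≤ c) ∧ (∀ i, |b i| ≤ c) ∧ ∀ x i, f x i = (∑ j, A i j * x j) + b i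

/-- `ComputesA ρ n hidden m f` : `f` is computed by a feedforward network with activation
function `ρ`, input dimension `n`, hidden layer widths `hidden` and output dimension `m`. -/
inductive ComputesA (ρ : ℝ → ℝ) :
    ∀ (n : ℕ), List ℕ → ∀ (m : ℕ), ((Fin n → ℝ) → Fin m → ℝ) → Prop
  | nil {n m : ℕ} (f : (Fin n → ℝ) → Fin m → ℝ) (hf : IsAffineMap f) :
      ComputesA ρ n [] m f
  | cons {n w m : ℕ} {ws : List ℕ} (f₀ : (Fin n → ℝ) → Fin w → ℝ)
      (g : (Fin w → ℝ) → Fin m → ℝ) (hf : IsAffineMap f₀)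
      (hg : ComputesA ρ w ws m g) :
      ComputesA ρ n (w :: ws) m (fun x => g (fun i => ρ (f₀ x i)))

/-- Same as `ComputesA` but all coefficients of all affine maps are bounded by `c`. -/
inductive ComputesAB (ρ : ℝ → ℝ) (c : ℝ) :
    ∀ (n : ℕ), List ℕ → ∀ (m : ℕ), ((Fin n → ℝ) → Fin m → ℝ) → Prop
  | nil {n m : ℕ} (f : (Fin n → ℝ) → Fin m → ℝ) (hf : IsAffineMapB c f) :
      ComputesAB ρ c n [] m f
  | cons {n w m : ℕ} {ws : List ℕ} (f₀ : (Fin n → ℝ) → Fin w → ℝ)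
      (g : (Fin w → ℝ) → Fin m → ℝ) (hf : IsAffineMapB c f₀)
      (hg : ComputesAB ρ c w ws m g) :
      ComputesAB ρ c n (w :: ws) m (fun x => g (fun i => ρ (f₀ x i)))

/-- `f` is computed by a ReLU network of design `(n, hidden…, m)`. -/
def Computes (n : ℕ) (hidden : List ℕ) (m : ℕ) (f : (Fin n → ℝ) → Fin m → ℝ) : Prop :=
  ComputesA relu n hidden m f

/-- `R` is a linear region of `f` : an open connected set on which `f` is affine,
maximal in the sense that `f` is not affine on any strictly larger open set. -/
def IsLinearRegion {n m : ℕ} (f : (Fin n → ℝ) → Fin m → ℝ) (R : Set (Fin n → ℝ)) : Prop :=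
  IsOpen R ∧ IsConnected R ∧ (∃ g, IsAffineMap g ∧ Set.EqOn f g R) ∧
    ∀ R' : Set (Fin n → ℝ), IsOpen R' → R ⊂ R' →
      ¬ ∃ g, IsAffineMap g ∧ Set.EqOn f g R'

/-- The number of linear regions of `f`. -/
def numRegions {n m : ℕ} (f : (Fin n → ℝ) → Fin m → ℝ) : ℕ :=
  {R | IsLinearRegion f R}.ncard

/-- `R(n, hidden…, m)` : the maximal number of linear regions of a function computed by a
ReLU network of design `(n, hidden…, m)`. -/
def maxRegions (n : ℕ) (hidden : List ℕ) (m : ℕ) : ℕ :=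
  sSup {k | ∃ f : (Fin n → ℝ) → Fin m → ℝ, Computes n hidden m f ∧ numRegions f = k}

/-- `f` is piecewise affine: continuous, finitely many linear regions, whose closures cover. -/
def IsPiecewiseAffine {n m : ℕ} (f : (Fin n → ℝ) → Fin m → ℝ) : Prop :=
  Continuous f ∧ {R | IsLinearRegion f R}.Finite ∧
    (⋃ R ∈ {R | IsLinearRegion f R}, closure R) = Set.univ

/-- `f : ℝ^d → ℝ` is an affine function. -/
def IsAffineFun {d : ℕ} (f : (Fin d → ℝ) → ℝ) : Prop :=
  ∃ (a : Fin d → ℝ) (b : ℝ), ∀ x, f x = (∑ i, a i * x i) + b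

/-- Binomial coefficient with integer arguments; equal to `0` if either argument is
negative (or if the top is smaller than the bottom). -/
def zchoose (a b : ℤ) : ℕ :=
  if 0 ≤ a ∧ 0 ≤ b then a.toNat.choose b.toNat else 0

/-- The function `f_{j,d}(n)` : `C(n,j)` for `j < d`, and
`C(n-2j+2d-1, d-1) + C(n-2j+2d-2, d-1)` for `j ≥ d`. -/
def fjd (j : ℕ) (d : ℤ) (nn : ℕ) : ℕ :=
  if (j : ℤ) < d then nn.choose j
  else zchoose ((nn : ℤ) - 2 * j + 2 * d - 1) (d - 1) +
       zchoose ((nn : ℤ) - 2 * j + 2 * d - 2) (d - 1)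

/-- `dval n₀ nh j l = min {n₀, nh 0 - j 0, …, nh (l-1) - j (l-1)}`, i.e. the quantity
`d_l` associated with input dimension `n₀`, hidden widths `nh` and a tuple `j`. -/
def dval (n₀ : ℕ) {L : ℕ} (nh : Fin L → ℕ) (j : Fin L → ℕ) (l : Fin L) : ℤ :=
  (Finset.Iio l).fold min (n₀ : ℤ) (fun i => (nh i : ℤ) - (j i : ℤ))

namespace Stmt5

/-- `s i = true` means `h i > 0` at `x`, `false` means `< 0`. -/
def Realizes {d n : ℕ} (h : Fin n → (Fin d → ℝ) → ℝ) (x : Fin d → ℝ) (s : Fin n → Bool) : Prop :=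
  ∀ i, (s i = true → 0 < h i x) ∧ (s i = false → h i x < 0)

def cellOf {d n : ℕ} (h : Fin n → (Fin d → ℝ) → ℝ) (s : Fin n → Bool) : Set (Fin d → ℝ) :=
  {x | Realizes h x s}

lemma affine_comb {d : ℕ} {f : (Fin d → ℝ) → ℝ} (hf : IsAffineFun f) (x y : Fin d → ℝ)
    (a b : ℝ) (hab : a + b = 1) :
    f (fun i => a * x i + b * y i) = a * f x + b * f y := by
  obtain ⟨c, e, hce⟩ := hf
  rw [hce, hce, hce]
  have : ∑ i, c i * (a * x i + b * y i)
      = ∑ i, (a * (c i * x i) + b * (c i * y i)) := by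
    apply Finset.sum_congr rfl; intro i _; ring
  rw [this, Finset.sum_add_distrib, ← Finset.mul_sum, ← Finset.mul_sum]
  have h2 : b = 1 - a := by linarith
  rw [h2]; ring

lemma affine_continuous {d : ℕ} {f : (Fin d → ℝ) → ℝ} (hf : IsAffineFun f) : Continuous f := by
  obtain ⟨c, e, hce⟩ := hf
  have : f = fun x => (∑ i, c i * x i) + e := funext hce
  rw [this]
  exact (continuous_finset_sum _ fun i _ => (continuous_const.mul (continuous_apply i))).add
    continuous_const

lemma comb_pos {a b p q : ℝ} (ha : 0 ≤ a) (hb : 0 ≤ b) (hab : a + b = 1)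
    (hp : 0 < p) (hq : 0 < q) : 0 < a * p + b * q := by
  rcases lt_or_eq_of_le ha with ha' | ha'
  · have := mul_pos ha' hp
    nlinarith [mul_nonneg hb hq.le]
  · have hb1 : b = 1 := by linarith
    simp [← ha', hb1, hq]

lemma realizes_segment {d n : ℕ} {h : Fin n → (Fin d → ℝ) → ℝ} (haff : ∀ i, IsAffineFun (h i))
    {x y : Fin d → ℝ} {s : Fin n → Bool} (hx : Realizes h x s) (hy : Realizes h y s)
    {a b : ℝ} (ha : 0 ≤ a) (hb : 0 ≤ b) (hab : a + b = 1) :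
    Realizes h (fun i => a * x i + b * y i) s := by
  intro i
  have hcomb := affine_comb (haff i) x y a b hab
  constructor
  · intro hs
    rw [hcomb]
    exact comb_pos ha hb hab ((hx i).1 hs) ((hy i).1 hs)
  · intro hs
    rw [hcomb]
    have := comb_pos ha hb hab (neg_pos.2 ((hx i).2 hs)) (neg_pos.2 ((hy i).2 hs))
    nlinarith

lemma cell_convex {d n : ℕ} {h : Fin n → (Fin d → ℝ) → ℝ} (haff : ∀ i, IsAffineFun (h i))
    (s : Fin n → Bool) : Convex ℝ (cellOf h s) := by
  intro x hx y hy a b ha hb hab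
  have : a • x + b • y = fun i => a * x i + b * y i := by
    funext i; simp [mul_comm]
  show Realizes h (a • x + b • y) s
  rw [this]
  exact realizes_segment haff hx hy ha hb hab

lemma cell_open {d n : ℕ} {h : Fin n → (Fin d → ℝ) → ℝ} (haff : ∀ i, IsAffineFun (h i))
    (s : Fin n → Bool) : IsOpen (cellOf h s) := by
  have : cellOf h s = ⋂ i, (if s i then (h i) ⁻¹' (Set.Ioi 0) else (h i) ⁻¹' (Set.Iio 0)) := by
    ext x
    simp only [Set.mem_iInter, cellOf, Set.mem_setOf_eq, Realizes]
    constructor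
    · intro hx i
      rcases Bool.eq_false_or_eq_true (s i) with hb | hb <;> simp [hb]
      · exact (hx i).1 hb
      · exact (hx i).2 hb
    · intro hx i
      have := hx i
      rcases Bool.eq_false_or_eq_true (s i) with hb | hb <;> simp [hb] at this <;>
        simp [hb, this]
  rw [this]
  apply isOpen_iInter_of_finite
  intro i
  split
  · exact (isOpen_Ioi).preimage (affine_continuous (haff i))
  · exact (isOpen_Iio).preimage (affine_continuous (haff i))


lemma cell_subset_nonzero {d n : ℕ} {h : Fin n → (Fin d → ℝ) → ℝ} (s : Fin n → Bool) :
    cellOf h s ⊆ {y | ∀ i, h i y ≠ 0} := by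
  intro y hy i
  cases hb : s i
  · exact ne_of_lt ((hy i).2 hb)
  · exact (ne_of_lt ((hy i).1 hb)).symm

lemma pattern_realizes {d n : ℕ} {h : Fin n → (Fin d → ℝ) → ℝ} (x : Fin d → ℝ)
    (hx : ∀ i, h i x ≠ 0) : Realizes h x (fun i => decide (0 < h i x)) := by
  intro i
  constructor
  · intro hs; exact of_decide_eq_true hs
  · intro hs
    have : ¬ 0 < h i x := of_decide_eq_false hs
    rcases lt_or_eq_of_le (not_lt.1 this) with h' | h'
    · exact h'
    · exact absurd h' (hx i)

theorem comp_eq_cell {d n : ℕ} {h : Fin n → (Fin d → ℝ) → ℝ} (haff : ∀ i, IsAffineFun (h i))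
    (x : Fin d → ℝ) (hx : ∀ i, h i x ≠ 0) :
    connectedComponentIn {y | ∀ i, h i y ≠ 0} x = cellOf h (fun i => decide (0 < h i x)) := by
  set s : Fin n → Bool := fun i => decide (0 < h i x) with hs
  set Ω : Set (Fin d → ℝ) := {y | ∀ i, h i y ≠ 0} with hΩ
  have hxΩ : x ∈ Ω := hx
  have hxc : x ∈ cellOf h s := pattern_realizes x hx
  have hcell_sub : cellOf h s ⊆ Ω := cell_subset_nonzero s
  set V : Set (Fin d → ℝ) :=
    ⋃ i, (if s i then (h i) ⁻¹' (Set.Iio 0) else (h i) ⁻¹' (Set.Ioi 0)) with hV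
  have hVopen : IsOpen V := by
    apply isOpen_iUnion
    intro i
    split
    · exact (isOpen_Iio).preimage (affine_continuous (haff i))
    · exact (isOpen_Ioi).preimage (affine_continuous (haff i))
  have hdisj : ∀ y, y ∈ cellOf h s → y ∈ V → False := by
    intro y hyc hyV
    obtain ⟨_, ⟨i, rfl⟩, hyi⟩ := hyV
    simp only at hyi
    cases hb : s i
    · simp [hb] at hyi
      exact absurd ((hyc i).2 hb) (not_lt.2 (le_of_lt hyi))
    · simp [hb] at hyi
      exact absurd ((hyc i).1 hb) (not_lt.2 (le_of_lt hyi))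
  have hcover : Ω ⊆ cellOf h s ∪ V := by
    intro y hy
    by_cases hyc : y ∈ cellOf h s
    · exact Or.inl hyc
    · right
      simp only [cellOf, Realizes, Set.mem_setOf_eq] at hyc
      obtain ⟨i, hi⟩ := not_forall.1 hyc
      refine Set.mem_iUnion.2 ⟨i, ?_⟩
      show y ∈ (if s i = true then (h i) ⁻¹' (Set.Iio 0) else (h i) ⁻¹' (Set.Ioi 0))
      cases hb : s i
      · rw [if_neg (by simp)]
        have hnot : ¬ (h i y < 0) := fun hneg =>
          hi ⟨fun ht => absurd ht (by simp [hb]), fun _ => hneg⟩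
        rcases lt_or_eq_of_le (not_lt.1 hnot) with h' | h'
        · exact h'
        · exact absurd h'.symm (hy i)
      · rw [if_pos rfl]
        have hnot : ¬ (0 < h i y) := fun hpos =>
          hi ⟨fun _ => hpos, fun hf => absurd hf (by simp [hb])⟩
        rcases lt_or_eq_of_le (not_lt.1 hnot) with h' | h'
        · exact h'
        · exact absurd h' (hy i)
  apply Set.Subset.antisymm
  · intro z hz
    by_contra hzc
    have hzV : z ∈ V := by
      rcases hcover (connectedComponentIn_subset Ω x hz) with h' | h'
      · exact absurd h' hzc
      · exact h'
    have hpre : IsPreconnected (connectedComponentIn Ω x) := isPreconnected_connectedComponentIn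
    have := hpre (cellOf h s) V (cell_open haff s) hVopen
      (fun w hw => hcover (connectedComponentIn_subset Ω x hw))
      ⟨x, mem_connectedComponentIn hxΩ, hxc⟩ ⟨z, hz, hzV⟩
    obtain ⟨w, _, hw1, hw2⟩ := this
    exact hdisj w hw1 hw2
  · exact ((cell_convex haff s).isPreconnected).subset_connectedComponentIn hxc hcell_sub


def falseCount {n : ℕ} (s : Fin n → Bool) : ℕ :=
  (Finset.univ.filter (fun i => s i = false)).card

noncomputable def patCount {d n : ℕ} (h : Fin n → (Fin d → ℝ) → ℝ) (m : ℕ) : ℕ :=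
  {s : Fin n → Bool | (∃ x, Realizes h x s) ∧ falseCount s ≤ m}.ncard

lemma zchoose_eq_zero {a b : ℤ} (hab : a < b) : zchoose a b = 0 := by
  unfold zchoose
  split
  · next hc => exact Nat.choose_eq_zero_of_lt (by omega)
  · rfl

lemma fjd_vanish {d : ℕ} (hd : 1 ≤ d) {n : ℕ} (j : ℕ) (hj : (n:ℤ) + min (d:ℤ) (n:ℤ) < 2*j) :
    fjd j (d:ℤ) n = 0 := by
  unfold fjd
  split
  · next hc => exact Nat.choose_eq_zero_of_lt (by omega)
  · next hc =>
    rw [zchoose_eq_zero (by omega), zchoose_eq_zero (by omega)]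

def G (n d m : ℕ) : ℕ := ∑ j ∈ Finset.range (m+1), fjd j (d:ℤ) n

lemma fjd_zero' {dz : ℤ} (hd : 1 ≤ dz) (n : ℕ) : fjd 0 dz n = 1 := by
  unfold fjd
  rw [if_pos (by push_cast; omega)]
  exact Nat.choose_zero_right n

lemma fjd_zero {d : ℕ} (hd : 1 ≤ d) (n : ℕ) : fjd 0 (d:ℤ) n = 1 :=
  fjd_zero' (by exact_mod_cast hd) n

lemma one_le_G {n d m : ℕ} (hd : 1 ≤ d) : 1 ≤ G n d m := by
  have h0 : fjd 0 (d:ℤ) n = 1 := fjd_zero hd n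
  calc 1 = fjd 0 (d:ℤ) n := h0.symm
    _ ≤ G n d m := Finset.single_le_sum (f := fun j => fjd j (d:ℤ) n)
        (fun i _ => Nat.zero_le _) (Finset.mem_range.2 (by omega))

lemma patCount_le_one {d n : ℕ} (h : Fin n → (Fin d → ℝ) → ℝ) :
    patCount h 0 ≤ 1 := by
  have hsub : {s : Fin n → Bool | (∃ x, Realizes h x s) ∧ falseCount s ≤ 0}
      ⊆ {fun _ => true} := by
    intro s hs
    have hfc : falseCount s = 0 := Nat.le_zero.1 hs.2
    have : ∀ i, s i = true := by
      intro i
      by_contra hb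
      have hb' : s i = false := by
        cases hbi : s i
        · rfl
        · exact absurd hbi hb
      have : i ∈ Finset.univ.filter (fun i => s i = false) := by
        simp [hb']
      rw [Finset.card_eq_zero.1 hfc] at this
      exact absurd this (Finset.notMem_empty i)
    exact funext this
  calc patCount h 0 ≤ ({fun _ => true} : Set (Fin n → Bool)).ncard :=
        Set.ncard_le_ncard hsub (Set.finite_singleton _)
    _ = 1 := Set.ncard_singleton _

theorem regions_le_patCount {d n : ℕ} (h : Fin n → (Fin d → ℝ) → ℝ)
    (haff : ∀ i, IsAffineFun (h i)) (m : ℕ) (hm : m ≤ n) :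
    {R : Set (Fin d → ℝ) |
        (∃ x : Fin d → ℝ, (∀ i, h i x ≠ 0) ∧
          R = connectedComponentIn {y | ∀ i, h i y ≠ 0} x) ∧
        n - m ≤ {i : Fin n | ∀ x ∈ R, 0 < h i x}.ncard}.ncard ≤ patCount h m := by
  set S : Set (Fin n → Bool) := {s | (∃ x, Realizes h x s) ∧ falseCount s ≤ m} with hS
  have hsub : {R : Set (Fin d → ℝ) |
        (∃ x : Fin d → ℝ, (∀ i, h i x ≠ 0) ∧
          R = connectedComponentIn {y | ∀ i, h i y ≠ 0} x) ∧
        n - m ≤ {i : Fin n | ∀ x ∈ R, 0 < h i x}.ncard} ⊆ (cellOf h) '' S := by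
    rintro R ⟨⟨x, hx, rfl⟩, hact⟩
    set s : Fin n → Bool := fun i => decide (0 < h i x) with hsdef
    have hcc := comp_eq_cell haff x hx
    have hxc : x ∈ cellOf h s := pattern_realizes x hx
    have hacts : {i : Fin n | ∀ y ∈ connectedComponentIn {y | ∀ i, h i y ≠ 0} x, 0 < h i y}
        = {i : Fin n | s i = true} := by
      rw [hcc]
      ext i
      simp only [Set.mem_setOf_eq]
      constructor
      · intro hall
        have hpos := hall x hxc
        cases hbi : s i
        · exact absurd ((hxc i).2 hbi) (not_lt.2 (le_of_lt hpos))
        · rfl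
      · intro hb y hy
        exact (hy i).1 hb
    have htc : {i : Fin n | s i = true}.ncard
        = (Finset.univ.filter (fun i => s i = true)).card := by
      rw [← Set.ncard_coe_finset]
      congr 1
      ext i; simp
    have hsum : (Finset.univ.filter (fun i => s i = true)).card + falseCount s = n := by
      unfold falseCount
      have hpn := Finset.card_filter_add_card_filter_not
        (s := (Finset.univ : Finset (Fin n))) (p := fun i => s i = true)
      have hconv : Finset.univ.filter (fun i => ¬ s i = true)
          = Finset.univ.filter (fun i => s i = false) := by
        ext i; simp [Bool.not_eq_true]
      rw [hconv] at hpn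
      simpa [Finset.card_univ] using hpn
    have hfc : falseCount s ≤ m := by
      have h1 : n - m ≤ {i : Fin n | s i = true}.ncard := by
        rw [← hacts]; exact hact
      rw [htc] at h1
      omega
    exact ⟨s, ⟨⟨x, hxc⟩, hfc⟩, hcc.symm⟩
  calc {R : Set (Fin d → ℝ) |
        (∃ x : Fin d → ℝ, (∀ i, h i x ≠ 0) ∧
          R = connectedComponentIn {y | ∀ i, h i y ≠ 0} x) ∧
        n - m ≤ {i : Fin n | ∀ x ∈ R, 0 < h i x}.ncard}.ncard
      ≤ ((cellOf h) '' S).ncard := Set.ncard_le_ncard hsub ((Set.toFinite S).image _)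
    _ ≤ S.ncard := Set.ncard_image_le (Set.toFinite S)
    _ = patCount h m := rfl


lemma zchoose_zero_right (a : ℤ) : zchoose a 0 = if 0 ≤ a then 1 else 0 := by
  unfold zchoose
  split_ifs with h1 h2
  · simp
  · omega
  · omega
  · rfl

lemma fjd_one_succ (m n : ℕ) : fjd (m+1) ((1:ℕ):ℤ) n
    = (if 0 ≤ (n:ℤ) - 2*(m+1) + 1 then 1 else 0) + (if 0 ≤ (n:ℤ) - 2*(m+1) then 1 else 0) := by
  unfold fjd
  have hc : ¬ ((((m+1):ℕ):ℤ) < ((1:ℕ):ℤ)) := by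
    intro hcon; push_cast at hcon; omega
  rw [if_neg hc]
  have e1 : ((n:ℤ) - 2 * (((m+1):ℕ):ℤ) + 2 * ((1:ℕ):ℤ) - 1) = (n:ℤ) - 2*(m+1) + 1 := by
    push_cast; ring
  have e2 : ((n:ℤ) - 2 * (((m+1):ℕ):ℤ) + 2 * ((1:ℕ):ℤ) - 2) = (n:ℤ) - 2*(m+1) := by
    push_cast; ring
  have e3 : (((1:ℕ):ℤ) - 1) = 0 := by norm_num
  rw [e1, e2, e3, zchoose_zero_right, zchoose_zero_right]

lemma Gd1 (n m : ℕ) : min (2*m+1) (n+1) ≤ G n 1 m := by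
  induction m with
  | zero =>
    have h0 : G n 1 0 = 1 := by
      unfold G
      rw [Finset.sum_range_one, fjd_zero' (by norm_num)]
    omega
  | succ m ih =>
    have hstep : G n 1 (m+1) = G n 1 m + fjd (m+1) ((1:ℕ):ℤ) n := by
      unfold G
      rw [Finset.sum_range_succ]
    rw [hstep, fjd_one_succ]
    split_ifs with h1 h2 h2 <;> omega

theorem base1 {n : ℕ} (m : ℕ) (h : Fin n → (Fin 1 → ℝ) → ℝ)
    (haff : ∀ i, IsAffineFun (h i)) : patCount h m ≤ G n 1 m := by
  classical
  choose a b hab using haff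
  set sl : Fin n → ℝ := fun i => a i 0 with hsl
  have hval : ∀ i x, h i x = sl i * x 0 + b i := by
    intro i x
    rw [hab i x, Fin.sum_univ_one]
  set Pf : (Fin n → Bool) → Finset (Fin n) :=
    fun s => Finset.univ.filter (fun i => 0 < sl i ∧ s i = false) with hPf
  set Nf : (Fin n → Bool) → Finset (Fin n) :=
    fun s => Finset.univ.filter (fun i => sl i < 0 ∧ s i = false) with hNf
  set S : Set (Fin n → Bool) := {s | (∃ x, Realizes h x s) ∧ falseCount s ≤ m} with hSdef
  -- monotonicity
  have hmono : ∀ s s' (x x' : Fin 1 → ℝ), Realizes h x s → Realizes h x' s' → x 0 ≤ x' 0 →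
      Pf s' ⊆ Pf s ∧ Nf s ⊆ Nf s' := by
    intro s s' x x' hx hx' hle
    constructor
    · intro i hi
      simp only [hPf, Finset.mem_filter] at hi ⊢
      obtain ⟨-, hsli, hfalse⟩ := hi
      have h1 : h i x' < 0 := (hx' i).2 hfalse
      have h2 : h i x ≤ h i x' := by rw [hval, hval]; nlinarith
      refine ⟨Finset.mem_univ _, hsli, ?_⟩
      cases hbi : s i
      · rfl
      · exact absurd ((hx i).1 hbi) (not_lt.2 (le_of_lt (lt_of_le_of_lt h2 h1)))
    · intro i hi
      simp only [hNf, Finset.mem_filter] at hi ⊢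
      obtain ⟨-, hsli, hfalse⟩ := hi
      have h1 : h i x < 0 := (hx i).2 hfalse
      have h2 : h i x' ≤ h i x := by rw [hval, hval]; nlinarith
      refine ⟨Finset.mem_univ _, hsli, ?_⟩
      cases hbi : s' i
      · rfl
      · exact absurd ((hx' i).1 hbi) (not_lt.2 (le_of_lt (lt_of_le_of_lt h2 h1)))
  -- strictness
  have hstrict : ∀ s s' (x x' : Fin 1 → ℝ), Realizes h x s → Realizes h x' s' → x 0 ≤ x' 0 →
      s ≠ s' → (Pf s').card < (Pf s).card ∨ (Nf s).card < (Nf s').card := by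
    intro s s' x x' hx hx' hle hne
    obtain ⟨i, hi⟩ := Function.ne_iff.1 hne
    have hmono' := hmono s s' x x' hx hx' hle
    rcases lt_trichotomy (sl i) 0 with hsli | hsli | hsli
    · -- negative slope : s i = true, s' i = false
      have hsi : s i = true := by
        cases hbi : s i
        · have h1 := (hx i).2 hbi
          have h2 : h i x' ≤ h i x := by rw [hval, hval]; nlinarith
          have hbi' : s' i = false := by
            cases hbi'' : s' i
            · rfl
            · exact absurd ((hx' i).1 hbi'') (by linarith)
          exact absurd (hbi.trans hbi'.symm) hi
        · rfl
      have hsi' : s' i = false := by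
        cases hbi'' : s' i
        · rfl
        · exact absurd (hsi.trans hbi''.symm) hi
      right
      apply Finset.card_lt_card
      refine ⟨hmono'.2, fun hsub => ?_⟩
      have hiN : i ∈ Nf s' := by
        simp only [hNf, Finset.mem_filter]
        exact ⟨Finset.mem_univ _, hsli, hsi'⟩
      have hiN' := hsub hiN
      simp only [hNf, Finset.mem_filter, hsi] at hiN'
      exact absurd hiN'.2.2 (by simp)
    · -- zero slope : contradiction
      have heq : h i x = h i x' := by rw [hval, hval, hsli]; ring
      exfalso
      cases hbi : s i
      · have h1 := (hx i).2 hbi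
        have hbi' : s' i = false := by
          cases hbi'' : s' i
          · rfl
          · exact absurd ((hx' i).1 hbi'') (by linarith)
        exact hi (hbi.trans hbi'.symm)
      · have h1 := (hx i).1 hbi
        have hbi' : s' i = true := by
          cases hbi'' : s' i
          · exact absurd ((hx' i).2 hbi'') (by linarith)
          · rfl
        exact hi (hbi.trans hbi'.symm)
    · -- positive slope : s i = false, s' i = true
      have hsi : s i = false := by
        cases hbi : s i
        · rfl
        · have h1 := (hx i).1 hbi
          have h2 : h i x ≤ h i x' := by rw [hval, hval]; nlinarith
          have hbi' : s' i = true := by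
            cases hbi'' : s' i
            · exact absurd ((hx' i).2 hbi'') (by linarith)
            · rfl
          exact absurd (hbi.trans hbi'.symm) hi
      have hsi' : s' i = true := by
        cases hbi'' : s' i
        · exact absurd (hsi.trans hbi''.symm) hi
        · rfl
      left
      apply Finset.card_lt_card
      refine ⟨hmono'.1, fun hsub => ?_⟩
      have hiP : i ∈ Pf s := by
        simp only [hPf, Finset.mem_filter]
        exact ⟨Finset.mem_univ _, hsli, hsi⟩
      have hiP' := hsub hiP
      simp only [hPf, Finset.mem_filter, hsi'] at hiP'
      exact absurd hiP'.2.2 (by simp)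
  -- cardinality bounds for members
  have hPle : ∀ s : Fin n → Bool, falseCount s ≤ m → (Pf s).card ≤ m := by
    intro s hs
    refine le_trans (Finset.card_le_card ?_) hs
    intro i hi
    simp only [hPf, Finset.mem_filter] at hi
    simp only [Finset.mem_filter]
    exact ⟨Finset.mem_univ _, hi.2.2⟩
  have hNle : ∀ s : Fin n → Bool, falseCount s ≤ m → (Nf s).card ≤ m := by
    intro s hs
    refine le_trans (Finset.card_le_card ?_) hs
    intro i hi
    simp only [hNf, Finset.mem_filter] at hi
    simp only [Finset.mem_filter]
    exact ⟨Finset.mem_univ _, hi.2.2⟩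
  -- global slope counts
  set p : ℕ := (Finset.univ.filter (fun i => 0 < sl i)).card with hp
  set q : ℕ := (Finset.univ.filter (fun i => sl i < 0)).card with hq
  have hPp : ∀ s, (Pf s).card ≤ p := by
    intro s
    apply Finset.card_le_card
    intro i hi
    simp only [hPf, Finset.mem_filter] at hi
    simp only [Finset.mem_filter]
    exact ⟨Finset.mem_univ _, hi.2.1⟩
  have hNq : ∀ s, (Nf s).card ≤ q := by
    intro s
    apply Finset.card_le_card
    intro i hi
    simp only [hNf, Finset.mem_filter] at hi
    simp only [Finset.mem_filter]
    exact ⟨Finset.mem_univ _, hi.2.1⟩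
  have hpq : p + q ≤ n := by
    rw [hp, hq, ← Finset.card_union_of_disjoint]
    · calc _ ≤ Finset.univ.card := Finset.card_le_card (Finset.subset_univ _)
        _ = n := Finset.card_fin n
    · rw [Finset.disjoint_filter]
      intro i _ h1
      simp only [not_lt]
      exact le_of_lt h1
  -- generic injection counting
  have hcount : ∀ (c : ℕ) (Φ : (Fin n → Bool) → ℕ), (∀ s ∈ S, Φ s < c) →
      (∀ s ∈ S, ∀ s' ∈ S, s ≠ s' → Φ s ≠ Φ s') → S.ncard ≤ c := by
    intro c Φ hlt hinj
    have hinj' : Set.InjOn Φ S := by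
      intro s hs s' hs' heq
      by_contra hne
      exact hinj s hs s' hs' hne heq
    have himg : Φ '' S ⊆ ↑(Finset.range c) := by
      rintro _ ⟨s, hs, rfl⟩
      simp only [Finset.coe_range, Set.mem_Iio]
      exact hlt s hs
    calc S.ncard = (Φ '' S).ncard := (Set.ncard_image_of_injOn hinj').symm
      _ ≤ (↑(Finset.range c) : Set ℕ).ncard :=
          Set.ncard_le_ncard himg (Finset.finite_toSet _)
      _ = c := by rw [Set.ncard_coe_finset, Finset.card_range]
  -- the two bounds
  have hbound1 : S.ncard ≤ 2*m+1 := by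
    apply hcount (2*m+1) (fun s => (Pf s).card + (m - (Nf s).card))
    · intro s hs
      show (Pf s).card + (m - (Nf s).card) < 2*m+1
      have := hPle s hs.2
      omega
    · intro s hs s' hs' hne
      show (Pf s).card + (m - (Nf s).card) ≠ (Pf s').card + (m - (Nf s').card)
      obtain ⟨x, hx⟩ := hs.1
      obtain ⟨x', hx'⟩ := hs'.1
      have hN := hNle s hs.2
      have hN' := hNle s' hs'.2
      rcases le_total (x 0) (x' 0) with hle | hle
      · rcases hstrict s s' x x' hx hx' hle hne with h1 | h1
        · have h2 := (hmono s s' x x' hx hx' hle).2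
          have h3 := Finset.card_le_card h2
          omega
        · have h2 := (hmono s s' x x' hx hx' hle).1
          have h3 := Finset.card_le_card h2
          omega
      · rcases hstrict s' s x' x hx' hx hle (Ne.symm hne) with h1 | h1
        · have h2 := (hmono s' s x' x hx' hx hle).2
          have h3 := Finset.card_le_card h2
          omega
        · have h2 := (hmono s' s x' x hx' hx hle).1
          have h3 := Finset.card_le_card h2
          omega
  have hbound2 : S.ncard ≤ n+1 := by
    refine le_trans (hcount (p+q+1) (fun s => (Pf s).card + (q - (Nf s).card)) ?_ ?_) (by omega)
    · intro s hs
      show (Pf s).card + (q - (Nf s).card) < p+q+1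
      have := hPp s
      omega
    · intro s hs s' hs' hne
      show (Pf s).card + (q - (Nf s).card) ≠ (Pf s').card + (q - (Nf s').card)
      obtain ⟨x, hx⟩ := hs.1
      obtain ⟨x', hx'⟩ := hs'.1
      have hN := hNq s
      have hN' := hNq s'
      rcases le_total (x 0) (x' 0) with hle | hle
      · rcases hstrict s s' x x' hx hx' hle hne with h1 | h1
        · have h2 := (hmono s s' x x' hx hx' hle).2
          have h3 := Finset.card_le_card h2
          omega
        · have h2 := (hmono s s' x x' hx hx' hle).1
          have h3 := Finset.card_le_card h2
          omega
      · rcases hstrict s' s x' x hx' hx hle (Ne.symm hne) with h1 | h1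
        · have h2 := (hmono s' s x' x hx' hx hle).2
          have h3 := Finset.card_le_card h2
          omega
        · have h2 := (hmono s' s x' x hx' hx hle).1
          have h3 := Finset.card_le_card h2
          omega
  have := Gd1 n m
  have hpc : patCount h m = S.ncard := rfl
  omega


lemma zchoose_pascal (a : ℤ) (b : ℤ) (hb : 0 ≤ b) :
    zchoose (a+1) (b+1) = zchoose a (b+1) + zchoose a b := by
  rcases le_or_gt 0 a with ha | ha
  · unfold zchoose
    rw [if_pos ⟨by omega, by omega⟩, if_pos ⟨ha, by omega⟩, if_pos ⟨ha, hb⟩]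
    have h1 : (a+1).toNat = a.toNat + 1 := by omega
    have h2 : (b+1).toNat = b.toNat + 1 := by omega
    rw [h1, h2, Nat.choose_succ_succ]
    simp only [Nat.succ_eq_add_one]
    omega
  · have h0 : zchoose a (b+1) = 0 := by unfold zchoose; rw [if_neg (by omega)]
    have h0' : zchoose a b = 0 := by unfold zchoose; rw [if_neg (by omega)]
    rw [h0, h0']
    unfold zchoose
    split
    · next hcond =>
      have e1 : (a+1).toNat = 0 := by omega
      have e2 : (b+1).toNat = b.toNat + 1 := by omega
      rw [e1, e2, Nat.choose_zero_succ]
    · rfl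

lemma zchoose_shift (A : ℤ) (e : ℕ) :
    zchoose A ((e:ℤ)+1) + zchoose (A-1) ((e:ℤ)+1)
    = (zchoose (A-1) ((e:ℤ)+1) + zchoose (A-2) ((e:ℤ)+1))
      + (zchoose (A-1) (e:ℤ) + zchoose (A-2) (e:ℤ)) := by
  have h1 := zchoose_pascal (A-1) (e:ℤ) (Int.natCast_nonneg e)
  have h2 := zchoose_pascal (A-2) (e:ℤ) (Int.natCast_nonneg e)
  have e0 : A - 1 + 1 = A := by ring
  have e0' : A - 2 + 1 = A - 1 := by ring
  rw [e0] at h1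
  rw [e0'] at h2
  omega

lemma fjd_pascal (j e n : ℕ) :
    fjd (j+1) ((e+2:ℕ):ℤ) (n+1) = fjd (j+1) ((e+2:ℕ):ℤ) n + fjd j ((e+1:ℕ):ℤ) n := by
  by_cases hj : j + 1 < e + 2
  · unfold fjd
    rw [if_pos (by push_cast; omega), if_pos (by push_cast; omega), if_pos (by push_cast; omega)]
    rw [Nat.choose_succ_succ]
    simp only [Nat.succ_eq_add_one]
    omega
  · unfold fjd
    rw [if_neg (by push_cast; omega), if_neg (by push_cast; omega), if_neg (by push_cast; omega)]
    set A : ℤ := (n:ℤ) - 2*j + 2*e + 2 with hA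
    have c1 : zchoose ((↑(n+1):ℤ) - 2 * (↑(j+1):ℤ) + 2 * ((e+2:ℕ):ℤ) - 1) (((e+2:ℕ):ℤ) - 1)
        = zchoose A ((e:ℤ)+1) := by congr 1 <;> push_cast <;> ring
    have c2 : zchoose ((↑(n+1):ℤ) - 2 * (↑(j+1):ℤ) + 2 * ((e+2:ℕ):ℤ) - 2) (((e+2:ℕ):ℤ) - 1)
        = zchoose (A-1) ((e:ℤ)+1) := by congr 1 <;> push_cast <;> ring
    have c3 : zchoose ((↑n:ℤ) - 2 * (↑(j+1):ℤ) + 2 * ((e+2:ℕ):ℤ) - 1) (((e+2:ℕ):ℤ) - 1)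
        = zchoose (A-1) ((e:ℤ)+1) := by congr 1 <;> push_cast <;> ring
    have c4 : zchoose ((↑n:ℤ) - 2 * (↑(j+1):ℤ) + 2 * ((e+2:ℕ):ℤ) - 2) (((e+2:ℕ):ℤ) - 1)
        = zchoose (A-2) ((e:ℤ)+1) := by congr 1 <;> push_cast <;> ring
    have c5 : zchoose ((↑n:ℤ) - 2 * (↑j:ℤ) + 2 * ((e+1:ℕ):ℤ) - 1) (((e+1:ℕ):ℤ) - 1)
        = zchoose (A-1) ((e:ℤ)) := by congr 1 <;> push_cast <;> ring
    have c6 : zchoose ((↑n:ℤ) - 2 * (↑j:ℤ) + 2 * ((e+1:ℕ):ℤ) - 2) (((e+1:ℕ):ℤ) - 1)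
        = zchoose (A-2) ((e:ℤ)) := by congr 1 <;> push_cast <;> ring
    rw [c1, c2, c3, c4, c5, c6]
    exact zchoose_shift A e

lemma G_succ (n e m : ℕ) :
    G (n+1) (e+2) (m+1) = G n (e+2) (m+1) + G n (e+1) m := by
  unfold G
  rw [Finset.sum_range_succ' (fun j => fjd j ((e+2:ℕ):ℤ) (n+1)) (m+1),
      Finset.sum_range_succ' (fun j => fjd j ((e+2:ℕ):ℤ) n) (m+1)]
  rw [Finset.sum_congr rfl (fun j _ => fjd_pascal j e n), Finset.sum_add_distrib]
  rw [fjd_zero' (by push_cast; omega), fjd_zero' (by push_cast; omega)]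
  ring


lemma affine_comp {D D' : ℕ} {f : (Fin D → ℝ) → ℝ} (hf : IsAffineFun f)
    (E : (Fin D' → ℝ) → (Fin D → ℝ)) (hE : ∀ i, IsAffineFun (fun y => E y i)) :
    IsAffineFun (fun y => f (E y)) := by
  obtain ⟨c, e, hc⟩ := hf
  choose P q hPq using hE
  have hPq' : ∀ i (y : Fin D' → ℝ), E y i = ∑ j, P i j * y j + q i := hPq
  refine ⟨fun j => ∑ i, c i * P i j, (∑ i, c i * q i) + e, fun y => ?_⟩
  show f (E y) = ∑ j, (∑ i, c i * P i j) * y j + ((∑ i, c i * q i) + e)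
  rw [hc]
  have hterm : ∀ i, c i * E y i = (∑ j, c i * P i j * y j) + c i * q i := by
    intro i
    rw [hPq' i y, mul_add, Finset.mul_sum]
    congr 1
    exact Finset.sum_congr rfl (fun j _ => by ring)
  calc (∑ i, c i * E y i) + e
      = (∑ i, ((∑ j, c i * P i j * y j) + c i * q i)) + e := by
        rw [Finset.sum_congr rfl (fun i _ => hterm i)]
    _ = ((∑ i, ∑ j, c i * P i j * y j) + ∑ i, c i * q i) + e := by
        rw [Finset.sum_add_distrib]
    _ = ((∑ j, ∑ i, c i * P i j * y j) + ∑ i, c i * q i) + e := by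
        rw [Finset.sum_comm]
    _ = (∑ j, (∑ i, c i * P i j) * y j) + ((∑ i, c i * q i) + e) := by
        rw [add_assoc]
        congr 1
        exact Finset.sum_congr rfl (fun j _ => by rw [Finset.sum_mul])

lemma coord_affine {D : ℕ} (j : Fin D) : IsAffineFun (fun y : Fin D → ℝ => y j) := by
  refine ⟨fun j' => if j' = j then 1 else 0, 0, fun y => ?_⟩
  simp [ite_mul]

lemma insert_coords_affine {D : ℕ} (k : Fin (D+1)) (w : (Fin D → ℝ) → ℝ) (hw : IsAffineFun w) :
    ∀ i, IsAffineFun (fun y : Fin D → ℝ => (k.insertNth (α := fun _ => ℝ) (w y) y) i) := by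
  intro i
  refine k.succAboveCases ?_ ?_ i
  · simp only [Fin.insertNth_apply_same]
    exact hw
  · intro j
    simp only [Fin.insertNth_apply_succAbove]
    exact coord_affine j

lemma div_affine {D : ℕ} (c : Fin (D+1) → ℝ) (cb : ℝ) (k : Fin (D+1)) :
    IsAffineFun (fun y : Fin D → ℝ => (-cb - ∑ j, c (k.succAbove j) * y j) / c k) := by
  refine ⟨fun j => -(c (k.succAbove j)) / c k, -cb / c k, fun y => ?_⟩
  have h1 : ∑ j, (-(c (k.succAbove j)) / c k) * y j
      = (∑ j, -(c (k.succAbove j) * y j)) / c k := by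
    rw [Finset.sum_div]
    exact Finset.sum_congr rfl (fun j _ => by ring)
  rw [h1, Finset.sum_neg_distrib]
  ring

lemma fc_proj_le {n : ℕ} (s : Fin (n+1) → Bool) :
    falseCount (fun i : Fin n => s i.castSucc) ≤ falseCount s := by
  unfold falseCount
  rw [← Finset.card_image_of_injective
    (Finset.univ.filter (fun i : Fin n => s i.castSucc = false)) (Fin.castSucc_injective n)]
  apply Finset.card_le_card
  intro i hi
  simp only [Finset.mem_image, Finset.mem_filter] at hi
  obtain ⟨i', ⟨-, hi'⟩, rfl⟩ := hi
  simp [hi']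

lemma fc_proj_lt {n : ℕ} (s : Fin (n+1) → Bool) (hlast : s (Fin.last n) = false) :
    falseCount (fun i : Fin n => s i.castSucc) + 1 ≤ falseCount s := by
  unfold falseCount
  rw [← Finset.card_image_of_injective
    (Finset.univ.filter (fun i : Fin n => s i.castSucc = false)) (Fin.castSucc_injective n)]
  have hnotmem : Fin.last n ∉
      (Finset.univ.filter (fun i : Fin n => s i.castSucc = false)).image Fin.castSucc := by
    simp only [Finset.mem_image, Finset.mem_filter]
    rintro ⟨i', -, hc⟩
    exact absurd hc (Fin.castSucc_lt_last i').ne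
  rw [← Finset.card_insert_of_notMem hnotmem]
  apply Finset.card_le_card
  intro i hi
  rcases Finset.mem_insert.1 hi with rfl | hi
  · simp [hlast]
  · simp only [Finset.mem_image, Finset.mem_filter] at hi
    obtain ⟨i', ⟨-, hi'⟩, rfl⟩ := hi
    simp [hi']


theorem core (e : ℕ) : ∀ (n m : ℕ) (h : Fin n → (Fin (e+1) → ℝ) → ℝ),
    (∀ i, IsAffineFun (h i)) → patCount h m ≤ G n (e+1) m := by
  induction e with
  | zero => intro n m h haff; exact base1 m h haff
  | succ e ihe =>
    intro n
    induction n with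
    | zero =>
      intro m h haff
      have h1 : patCount h m ≤ 1 := by
        unfold patCount
        have hsub : {s : Fin 0 → Bool | (∃ x, Realizes h x s) ∧ falseCount s ≤ m}
            ⊆ {fun i => i.elim0} := by
          intro s _
          simp only [Set.mem_singleton_iff]
          funext i
          exact i.elim0
        calc _ ≤ ({fun i => i.elim0} : Set (Fin 0 → Bool)).ncard :=
              Set.ncard_le_ncard hsub (Set.finite_singleton _)
          _ = 1 := Set.ncard_singleton _
      exact le_trans h1 (one_le_G (by omega))
    | succ n ihn =>
      intro m h haff
      rcases m with _ | m
      · exact le_trans (patCount_le_one h) (one_le_G (by omega))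
      set lst := Fin.last n with hlst
      set h' : Fin n → (Fin (e+2) → ℝ) → ℝ := fun i => h i.castSucc with hh'
      have haff' : ∀ i, IsAffineFun (h' i) := fun i => haff _
      set ι : (Fin (n+1) → Bool) → (Fin n → Bool) := fun s i => s i.castSucc with hι
      set T : Set (Fin (n+1) → Bool) :=
        {s | (∃ x, Realizes h x s) ∧ falseCount s ≤ m+1} with hT
      set A : Set (Fin n → Bool) :=
        {s' | (∃ x, Realizes h' x s') ∧ falseCount s' ≤ m+1} with hA
      set T1 : Set (Fin (n+1) → Bool) := {s ∈ T | s lst = true} with hT1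
      set T2b : Set (Fin (n+1) → Bool) :=
        {s ∈ T | s lst = false ∧ ∃ x, Realizes h x (Function.update s lst true)} with hT2b
      set T2o : Set (Fin (n+1) → Bool) :=
        {s ∈ T | s lst = false ∧ ¬ ∃ x, Realizes h x (Function.update s lst true)} with hT2o
      have hpT : patCount h (m+1) = T.ncard := rfl
      -- partition of the count
      have hsplit : T.ncard = T1.ncard + T2b.ncard + T2o.ncard := by
        have hU : T = (T1 ∪ T2b) ∪ T2o := by
          ext s
          constructor
          · intro hs
            by_cases hb : s lst = true
            · exact Or.inl (Or.inl ⟨hs, hb⟩)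
            · have hb' : s lst = false := by
                cases hbb : s lst
                · rfl
                · exact absurd hbb hb
              by_cases hxx : ∃ x, Realizes h x (Function.update s lst true)
              · exact Or.inl (Or.inr ⟨hs, hb', hxx⟩)
              · exact Or.inr ⟨hs, hb', hxx⟩
          · rintro ((⟨hs,-⟩|⟨hs,-⟩)|⟨hs,-⟩) <;> exact hs
        have hd12 : Disjoint (T1 ∪ T2b) T2o := by
          rw [Set.disjoint_left]
          rintro s (⟨-,hb⟩|⟨-,-,hxx⟩) ⟨-,hb',hx'⟩
          · rw [hb] at hb'; exact absurd hb' (by simp)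
          · exact hx' hxx
        have hd1 : Disjoint T1 T2b := by
          rw [Set.disjoint_left]
          rintro s ⟨-,hb⟩ ⟨-,hb',-⟩
          rw [hb] at hb'; exact absurd hb' (by simp)
        rw [hU, Set.ncard_union_eq hd12 (Set.toFinite _) (Set.toFinite _),
          Set.ncard_union_eq hd1 (Set.toFinite _) (Set.toFinite _)]
      -- injectivity of the projection on fixed-last-value sets
      have hinj : ∀ (c : Bool) (U : Set (Fin (n+1) → Bool)), (∀ s ∈ U, s lst = c) →
          Set.InjOn ι U := by
        intro c U hU s hs s' hs' heq
        funext i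
        refine Fin.lastCases ?_ ?_ i
        · rw [hU s hs, hU s' hs']
        · intro j; exact congrFun heq j
      -- projections of T-members are in A
      have hsubA : ∀ s ∈ T, ι s ∈ A := by
        intro s hs
        obtain ⟨⟨x, hx⟩, hfc⟩ := hs
        exact ⟨⟨x, fun i => hx i.castSucc⟩, le_trans (fc_proj_le s) hfc⟩
      -- disjointness of the two images
      have hdisj_img : Disjoint (ι '' T1) (ι '' T2o) := by
        rw [Set.disjoint_left]
        rintro s' ⟨s, hs, rfl⟩ ⟨t, ht, hts⟩
        obtain ⟨hsT, hslast⟩ := hs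
        obtain ⟨htT, htlast, htnx⟩ := ht
        apply htnx
        obtain ⟨⟨x, hx⟩, -⟩ := hsT
        refine ⟨x, ?_⟩
        have hupd : Function.update t lst true = s := by
          funext i
          refine Fin.lastCases ?_ ?_ i
          · rw [Function.update_self, hslast]
          · intro j
            rw [Function.update_of_ne (Fin.castSucc_lt_last j).ne]
            exact congrFun hts j
        rw [hupd]
        exact hx
      have himg1 : (ι '' T1).ncard + (ι '' T2o).ncard ≤ A.ncard := by
        rw [← Set.ncard_union_eq hdisj_img (Set.toFinite _) (Set.toFinite _)]
        apply Set.ncard_le_ncard _ (Set.toFinite A)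
        rintro s' (⟨s,hs,rfl⟩|⟨s,hs,rfl⟩)
        · exact hsubA s hs.1
        · exact hsubA s hs.1
      have hc1 : T1.ncard = (ι '' T1).ncard :=
        (Set.ncard_image_of_injOn (hinj true T1 (fun s hs => hs.2))).symm
      have hc2o : T2o.ncard = (ι '' T2o).ncard :=
        (Set.ncard_image_of_injOn (hinj false T2o (fun s hs => hs.2.1))).symm
      have hc2b : T2b.ncard = (ι '' T2b).ncard :=
        (Set.ncard_image_of_injOn (hinj false T2b (fun s hs => hs.2.1))).symm
      have hAbound : A.ncard ≤ G n (e+1+1) (m+1) := ihn (m+1) h' haff'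
      have hGrec : G (n+1) (e+1+1) (m+1) = G n (e+1+1) (m+1) + G n (e+1) m := G_succ n e m
      rcases Set.eq_empty_or_nonempty T2b with hTbE | ⟨s₀, hs₀⟩
      · have hz : T2b.ncard = 0 := by rw [hTbE, Set.ncard_empty]
        omega
      -- hard case : build the restriction to the hyperplane of the last functional
      obtain ⟨⟨⟨v, hv⟩, -⟩, hs₀last, ⟨u, hu⟩⟩ := hs₀
      have hupos : 0 < h lst u := (hu lst).1 (Function.update_self lst true s₀)
      have hvneg : h lst v < 0 := (hv lst).2 hs₀last
      obtain ⟨c, cb, hcb⟩ := haff lst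
      have hkex : ∃ k, c k ≠ 0 := by
        by_contra hall
        push_neg at hall
        have hconst : ∀ x, h lst x = cb := by
          intro x
          rw [hcb x, Finset.sum_eq_zero (fun i _ => by rw [hall i, zero_mul])]
          ring
        rw [hconst u] at hupos
        rw [hconst v] at hvneg
        linarith
      obtain ⟨k, hk⟩ := hkex
      set w : (Fin (e+1) → ℝ) → ℝ :=
        fun y => (-cb - ∑ j, c (k.succAbove j) * y j) / c k with hwdef
      set E : (Fin (e+1) → ℝ) → (Fin (e+2) → ℝ) := fun y => k.insertNth (w y) y with hEdef
      have hEco : ∀ i, IsAffineFun (fun y => E y i) :=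
        insert_coords_affine k w (div_affine c cb k)
      have hEsect : ∀ x : Fin (e+2) → ℝ, h lst x = 0 → E (fun j => x (k.succAbove j)) = x := by
        intro x hx0
        funext i
        refine k.succAboveCases ?_ ?_ i
        · show E (fun j => x (k.succAbove j)) k = x k
          rw [hEdef]
          simp only [Fin.insertNth_apply_same]
          rw [hcb, Fin.sum_univ_succAbove (fun i => c i * x i) k] at hx0
          rw [hwdef]
          field_simp
          linarith [hx0]
        · intro j
          show E (fun j => x (k.succAbove j)) (k.succAbove j) = x (k.succAbove j)
          rw [hEdef]
          simp only [Fin.insertNth_apply_succAbove]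
      set g : Fin n → (Fin (e+1) → ℝ) → ℝ := fun i y => h' i (E y) with hgdef
      have hgaff : ∀ i, IsAffineFun (g i) := fun i => affine_comp (haff' i) E hEco
      set B : Set (Fin n → Bool) := {s' | (∃ y, Realizes g y s') ∧ falseCount s' ≤ m} with hB
      have hBbound : B.ncard ≤ G n (e+1) m := ihe n m g hgaff
      have himg2 : ι '' T2b ⊆ B := by
        rintro s' ⟨s, hs, rfl⟩
        obtain ⟨⟨⟨v', hv'⟩, hfc⟩, hslast, ⟨u', hu'⟩⟩ := hs
        set φ : ℝ → ℝ := fun t => h lst (fun i => (1-t) * u' i + t * v' i) with hφdef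
        have hcont : Continuous φ := by
          apply (affine_continuous (haff lst)).comp
          apply continuous_pi
          intro i
          exact ((continuous_const.sub continuous_id).mul continuous_const).add
            (continuous_id.mul continuous_const)
        have hφ0 : 0 < φ 0 := by
          have he0 : (fun i => (1-(0:ℝ)) * u' i + 0 * v' i) = u' := by
            funext i; simp
          show 0 < h lst (fun i => (1-(0:ℝ)) * u' i + 0 * v' i)
          rw [he0]
          exact (hu' lst).1 (Function.update_self lst true s)
        have hφ1 : φ 1 < 0 := by
          have he1 : (fun i => (1-(1:ℝ)) * u' i + 1 * v' i) = v' := by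
            funext i; simp
          show h lst (fun i => (1-(1:ℝ)) * u' i + 1 * v' i) < 0
          rw [he1]
          exact (hv' lst).2 hslast
        obtain ⟨t, ht01, hφt⟩ : ∃ t ∈ Set.Icc (0:ℝ) 1, φ t = 0 := by
          have hiv := intermediate_value_Icc' (by norm_num : (0:ℝ) ≤ 1) hcont.continuousOn
          have h0mem : (0:ℝ) ∈ Set.Icc (φ 1) (φ 0) := ⟨le_of_lt hφ1, le_of_lt hφ0⟩
          obtain ⟨t, ht, hft⟩ := hiv h0mem
          exact ⟨t, ht, hft⟩
        obtain ⟨ht0, ht1⟩ := ht01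
        set z : Fin (e+2) → ℝ := fun i => (1-t) * u' i + t * v' i with hzdef
        have hru : Realizes h' u' (ι s) := by
          intro i
          have hx := hu' i.castSucc
          rw [Function.update_of_ne (Fin.castSucc_lt_last i).ne] at hx
          exact hx
        have hrv : Realizes h' v' (ι s) := fun i => hv' i.castSucc
        have hrz : Realizes h' z (ι s) :=
          realizes_segment haff' hru hrv (by linarith) ht0 (by ring)
        have hzero : h lst z = 0 := hφt
        have hEz : E (fun j => z (k.succAbove j)) = z := hEsect z hzero
        refine ⟨⟨(fun j => z (k.succAbove j)), ?_⟩, ?_⟩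
        · intro i
          have hgeq : g i (fun j => z (k.succAbove j)) = h' i z := by
            rw [hgdef]
            show h' i (E (fun j => z (k.succAbove j))) = h' i z
            rw [hEz]
          constructor
          · intro hb
            rw [hgeq]
            exact (hrz i).1 hb
          · intro hb
            rw [hgeq]
            exact (hrz i).2 hb
        · have hlt := fc_proj_lt s hslast
          have hieq : ι s = fun i : Fin n => s i.castSucc := rfl
          rw [hieq]
          omega
      have himg2card : (ι '' T2b).ncard ≤ B.ncard :=
        Set.ncard_le_ncard himg2 (Set.toFinite B)
      omega

end Stmt5

/-- the number of regions of an arrangement of `n` affine hyperplanes in `ℝ^d`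
whose activation set has size at least `n - m` is at most `∑_{j=0}^m f_{j,d}(n)`;
moreover `f_{j,d}(n) = 0` for `j > (n + min{d,n})/2`. -/
theorem stmt_5 (d : ℕ) (hd : 1 ≤ d) (nn : ℕ) (hn : 1 ≤ nn)
    (h : Fin nn → (Fin d → ℝ) → ℝ) (haff : ∀ i, IsAffineFun (h i))
    (m : ℕ) (hm : m ≤ nn) :
    {R : Set (Fin d → ℝ) |
        (∃ x : Fin d → ℝ, (∀ i, h i x ≠ 0) ∧
          R = connectedComponentIn {y | ∀ i, h i y ≠ 0} x) ∧
        nn - m ≤ {i : Fin nn | ∀ x ∈ R, 0 < h i x}.ncard}.ncard ≤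
      ∑ j ∈ Finset.range (m + 1), fjd j (d : ℤ) nn ∧
    ∀ j : ℕ, (nn : ℤ) + min (d : ℤ) (nn : ℤ) < 2 * (j : ℤ) → fjd j (d : ℤ) nn = 0 := by
  obtain ⟨e, rfl⟩ : ∃ e, d = e + 1 := ⟨d - 1, by omega⟩
  constructor
  · calc {R : Set (Fin (e+1) → ℝ) |
        (∃ x : Fin (e+1) → ℝ, (∀ i, h i x ≠ 0) ∧
          R = connectedComponentIn {y | ∀ i, h i y ≠ 0} x) ∧
        nn - m ≤ {i : Fin nn | ∀ x ∈ R, 0 < h i x}.ncard}.ncard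
        ≤ Stmt5.patCount h m := Stmt5.regions_le_patCount h haff m hm
      _ ≤ Stmt5.G nn (e+1) m := Stmt5.core e nn m h haff
      _ = ∑ j ∈ Finset.range (m + 1), fjd j ((e+1 : ℕ) : ℤ) nn := rfl
  · intro j hj
    exact Stmt5.fjd_vanish hd j hj
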